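/- There exists a universal constant c > 0 such that for every k ≥ 2 and every ε ∈ (0,1/4], any (n, ε)-uniformity test using the family 𝒲_⊥^{1/√k} of partial-erasure channels with leakage parameter η = 1/√k (in particular, any sequentially interactive uniformity-testing protocol under these constraints) must satisfy n ≥ c · k / ε². -/

import Mathlib

open Finset

namespace Paper

/-- A probability distribution on a finite type, given by its mass function. -/
def IsDist {α : Type*} [Fintype α] (p : α → ℝ) : Prop :=
  (∀ a, 0 ≤ p a) ∧ ∑ a, p a = 1

/-- A channel (row-stochastic kernel) from `α` to the finite alphabet `𝒴`. -/
def IsChannel {α 𝒴 : Type*} [Fintype α] [Fintype 𝒴] (W : α → 𝒴 → ℝ) : Prop :=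
  ∀ x, IsDist (W x)

/-- Total variation distance between mass functions on a finite type. -/
noncomputable def tvDist {α : Type*} [Fintype α] (p q : α → ℝ) : ℝ :=
  (∑ a, |p a - q a|) / 2

/-- The element `2i-1` (1-indexed) of `[2k]`, i.e. index `2i` in 0-indexed terms. -/
def lo {k : ℕ} (i : Fin k) : Fin (2 * k) := ⟨2 * i.val, by have := i.isLt; omega⟩

/-- The element `2i` (1-indexed) of `[2k]`, i.e. index `2i+1` in 0-indexed terms. -/
def hi {k : ℕ} (i : Fin k) : Fin (2 * k) := ⟨2 * i.val + 1, by have := i.isLt; omega⟩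

/-- The channel information matrix `H(W)`  (division by `0` yields `0` in Lean,
matching the convention that terms with zero denominator vanish). -/
noncomputable def HMat (k : ℕ) {𝒴 : Type*} [Fintype 𝒴] (W : Fin (2 * k) → 𝒴 → ℝ) :
    Matrix (Fin k) (Fin k) ℝ := fun i j =>
  ∑ y, (W (lo i) y - W (hi i) y) * (W (lo j) y - W (hi j) y) / (∑ x, W x y)

/-- Nuclear norm of a real symmetric matrix (sum of absolute values of eigenvalues). -/
noncomputable def nucNorm {k : ℕ} (A : Matrix (Fin k) (Fin k) ℝ) : ℝ :=
  if h : A.IsHermitian then ∑ i, |h.eigenvalues i| else 0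

/-- Operator (spectral) norm of a real symmetric matrix. -/
noncomputable def opNorm {k : ℕ} (A : Matrix (Fin k) (Fin k) ℝ) : ℝ :=
  if h : A.IsHermitian then ⨆ i, |h.eigenvalues i| else 0

/-- Frobenius norm of a matrix. -/
noncomputable def frobNorm {k : ℕ} (A : Matrix (Fin k) (Fin k) ℝ) : ℝ :=
  Real.sqrt (∑ i, ∑ j, (A i j) ^ 2)

/-- `‖𝒲‖_*`, the maximal nuclear norm of `H(W)` over the family. -/
noncomputable def famNuc (k : ℕ) {𝒴 : Type*} [Fintype 𝒴]
    (𝒲 : Set (Fin (2 * k) → 𝒴 → ℝ)) : ℝ :=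
  sSup ((fun W => nucNorm (HMat k W)) '' 𝒲)

/-- `‖𝒲‖_op`, the maximal operator norm of `H(W)` over the family. -/
noncomputable def famOp (k : ℕ) {𝒴 : Type*} [Fintype 𝒴]
    (𝒲 : Set (Fin (2 * k) → 𝒴 → ℝ)) : ℝ :=
  sSup ((fun W => opNorm (HMat k W)) '' 𝒲)

/-- `‖𝒲‖_F`, the maximal Frobenius norm of `H(W)` over the family. -/
noncomputable def famFrob (k : ℕ) {𝒴 : Type*} [Fintype 𝒴]
    (𝒲 : Set (Fin (2 * k) → 𝒴 → ℝ)) : ℝ :=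
  sSup ((fun W => frobNorm (HMat k W)) '' 𝒲)

/-- A deterministic sequentially interactive protocol over `n` users: to each user `t`
and each message prefix it assigns a channel. -/
def Protocol (k n : ℕ) (𝒴 : Type*) : Type _ :=
  (t : Fin n) → (Fin t.val → 𝒴) → Fin (2 * k) → 𝒴 → ℝ

/-- All channels used by the protocol belong to the family `𝒲`. -/
def UsesFamily {k n : ℕ} {𝒴 : Type*} (π : Protocol k n 𝒴)
    (𝒲 : Set (Fin (2 * k) → 𝒴 → ℝ)) : Prop :=
  ∀ t pre, π t pre ∈ 𝒲

/-- All kernels used by the protocol are genuine channels. -/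
def ChannelProtocol {k n : ℕ} {𝒴 : Type*} [Fintype 𝒴] (π : Protocol k n 𝒴) : Prop :=
  ∀ t pre, IsChannel (π t pre)

/-- Distribution of the first `t` messages of the transcript when the inputs are
i.i.d. with law `p`. -/
noncomputable def prefixDist {k n : ℕ} {𝒴 : Type*} [Fintype 𝒴] (π : Protocol k n 𝒴)
    (p : Fin (2 * k) → ℝ) (t : ℕ) (ht : t ≤ n) (y : Fin t → 𝒴) : ℝ :=
  ∏ s : Fin t, ∑ x, p x *
    π ⟨s.val, lt_of_lt_of_le s.isLt ht⟩ (fun r => y ⟨r.val, lt_trans r.isLt s.isLt⟩) x (y s)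

/-- Distribution of the full transcript `Y^n` when the inputs are i.i.d. with law `p`. -/
noncomputable def transDist {k n : ℕ} {𝒴 : Type*} [Fintype 𝒴] (π : Protocol k n 𝒴)
    (p : Fin (2 * k) → ℝ) (y : Fin n → 𝒴) : ℝ :=
  prefixDist π p n le_rfl y

/-- The uniform distribution on `[2k]`. -/
noncomputable def uniform2k (k : ℕ) : Fin (2 * k) → ℝ := fun _ => (2 * (k : ℝ))⁻¹

/-- An `(n, ε)`-estimator using `𝒲`: a public-coin sequentially interactive protocol
(seed distribution `μ`, protocols `π u`, channels from `𝒲`) together with an estimator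
`est` such that, for every input distribution `p`, the probability that the estimate is
more than `ε` away from `p` in total variation is at most `1/100`. -/
def IsEstimator {k n : ℕ} {𝒴 𝒰 : Type*} [Fintype 𝒴] [Fintype 𝒰]
    (𝒲 : Set (Fin (2 * k) → 𝒴 → ℝ)) (μ : 𝒰 → ℝ) (π : 𝒰 → Protocol k n 𝒴)
    (est : (Fin n → 𝒴) → 𝒰 → Fin (2 * k) → ℝ) (ε : ℝ) : Prop :=
  IsDist μ ∧ (∀ u, UsesFamily (π u) 𝒲) ∧ (∀ u, ChannelProtocol (π u)) ∧
  (∀ y u, IsDist (est y u)) ∧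
  ∀ p : Fin (2 * k) → ℝ, IsDist p →
    (∑ u, ∑ y : Fin n → 𝒴, μ u * (transDist (π u) p y *
      (if ε < tvDist (est y u) p then (1 : ℝ) else 0))) ≤ 1 / 100

/-- An `(n, ε)`-uniformity test using `𝒲`: a public-coin sequentially interactive
protocol together with a randomized decision rule `T` (probability of output `1`)
accepting uniform and rejecting `ε`-far distributions with probability `99/100`. -/
def IsUnifTest {k n : ℕ} {𝒴 𝒰 : Type*} [Fintype 𝒴] [Fintype 𝒰]
    (𝒲 : Set (Fin (2 * k) → 𝒴 → ℝ)) (μ : 𝒰 → ℝ) (π : 𝒰 → Protocol k n 𝒴)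
    (T : (Fin n → 𝒴) → 𝒰 → ℝ) (ε : ℝ) : Prop :=
  IsDist μ ∧ (∀ u, UsesFamily (π u) 𝒲) ∧ (∀ u, ChannelProtocol (π u)) ∧
  (∀ y u, T y u ∈ Set.Icc (0 : ℝ) 1) ∧
  (99 / 100 ≤ ∑ u, ∑ y : Fin n → 𝒴, μ u * (transDist (π u) (uniform2k k) y * (1 - T y u))) ∧
  ∀ p : Fin (2 * k) → ℝ, IsDist p → ε ≤ tvDist p (uniform2k k) →
    99 / 100 ≤ ∑ u, ∑ y : Fin n → 𝒴, μ u * (transDist (π u) p y * T y u)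

/-- Mutual information (in nats) of a joint mass function on `A × B`. -/
noncomputable def miNats {A B : Type*} [Fintype A] [Fintype B] (j : A → B → ℝ) : ℝ :=
  ∑ a, ∑ b, j a b * Real.log (j a b / ((∑ b', j a b') * (∑ a', j a' b)))

/-- Mutual information (in bits) of a joint mass function on `A × B`. -/
noncomputable def miBits {A B : Type*} [Fintype A] [Fintype B] (j : A → B → ℝ) : ℝ :=
  ∑ a, ∑ b, j a b * Real.logb 2 (j a b / ((∑ b', j a b') * (∑ a', j a' b)))

/-- Binary entropy function (in bits). -/
noncomputable def binEnt (t : ℝ) : ℝ :=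
  -(t * Real.logb 2 t) - (1 - t) * Real.logb 2 (1 - t)

/-- `±1` encoding of a Boolean. -/
def pm (b : Bool) : ℝ := if b then 1 else -1

/-- The joint mass function of `(Z_i, Y)` obtained from a joint mass function of `(Z, Y)`
for `Z ∈ {−1,+1}^k` (encoded via Booleans). -/
noncomputable def coordJoint {k : ℕ} {𝒴 : Type*} [Fintype 𝒴]
    (j : (Fin k → Bool) → 𝒴 → ℝ) (i : Fin k) : Bool → 𝒴 → ℝ :=
  fun b y => ∑ z : Fin k → Bool, if z i = b then j z y else 0

/-- The Paninski perturbation `p_z` of the uniform distribution on `[2k]`: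
`p_z(2i−1) = (1+2ε z_i)/(2k)` and `p_z(2i) = (1−2ε z_i)/(2k)` (1-indexed). -/
noncomputable def paninski (k : ℕ) (ε : ℝ) (z : Fin k → Bool) : Fin (2 * k) → ℝ :=
  fun x => (1 + (if x.val % 2 = 0 then (1 : ℝ) else -1) * (2 * ε) *
    pm (z ⟨x.val / 2, by have := x.isLt; omega⟩)) / (2 * k)

/-- Chi-square divergence between mass functions on a finite type. -/
noncomputable def chiSq {α : Type*} [Fintype α] (P Q : α → ℝ) : ℝ :=
  ∑ y, (P y - Q y) ^ 2 / Q y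

/-- Kullback–Leibler divergence (in nats) between mass functions on a finite type. -/
noncomputable def klDivNats {α : Type*} [Fintype α] (P Q : α → ℝ) : ℝ :=
  ∑ y, P y * Real.log (P y / Q y)

/-- The leaky-query channel `W_u^η` on output alphabet `[2k] ∪ {1*, 0*}`
(`Sum.inr true = 1*`, `Sum.inr false = 0*`). -/
noncomputable def leaky (k : ℕ) (η : ℝ) (u : Fin (2 * k) → ℝ) :
    Fin (2 * k) → (Fin (2 * k) ⊕ Bool) → ℝ :=
  fun x y => Sum.elim (fun x' => if x' = x then η else 0)
    (fun b => if b then (1 - η) * u x else (1 - η) * (1 - u x)) y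

/-- The vector `δ(u)` associated with a leaky-query channel. -/
noncomputable def leakyDelta (k : ℕ) (u : Fin (2 * k) → ℝ) : Fin k → ℝ :=
  fun i => (u (lo i) - u (hi i)) *
    Real.sqrt ((2 * (k : ℝ)) / ((∑ x, u x) * (2 * (k : ℝ) - ∑ x, u x)))

/-- The partial-erasure channel `W_{x*}` on output alphabet `[2k] ∪ {⊥}`. -/
noncomputable def eraseCh (k : ℕ) (η : ℝ) (xs : Fin (2 * k)) :
    Fin (2 * k) → (Fin (2 * k) ⊕ Unit) → ℝ :=
  fun x y => Sum.elim (fun x' => if x' = x then (if x = xs then 1 else η) else 0)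
    (fun _ => if x = xs then 0 else 1 - η) y

/-- The family of all `ρ`-locally differentially private channels from `[2k]` to `𝒴`. -/
def ldpFamily (k : ℕ) {𝒴 : Type*} [Fintype 𝒴] (ρ : ℝ) :
    Set (Fin (2 * k) → 𝒴 → ℝ) :=
  { W | IsChannel W ∧ ∀ x x' y, W x y ≤ Real.exp ρ * W x' y }

section Aux
variable {k : ℕ}

/-- Pairing equivalence `Fin k × Bool ≃ Fin (2*k)`. -/
def pairEquiv (k : ℕ) : Fin k × Bool ≃ Fin (2 * k) where
  toFun p := ⟨2 * p.1.val + (if p.2 then 1 else 0), by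
    have := p.1.isLt; cases p.2 <;> simp <;> omega⟩
  invFun x := (⟨x.val / 2, by have := x.isLt; omega⟩, x.val % 2 == 1)
  left_inv p := by
    rcases p with ⟨i, b⟩
    cases b <;> (refine Prod.ext ?_ ?_) <;> simp <;>
      first | omega | (apply Fin.ext; simp; omega)
  right_inv x := by
    apply Fin.ext
    have := x.isLt
    rcases Nat.mod_two_eq_zero_or_one x.val with h | h
    · simp [h]; omega
    · simp [h]; omega

lemma pairEquiv_false (i : Fin k) : pairEquiv k (i, false) = lo i := by
  apply Fin.ext; simp [pairEquiv, lo]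

lemma pairEquiv_true (i : Fin k) : pairEquiv k (i, true) = hi i := by
  apply Fin.ext; simp [pairEquiv, hi]

lemma sum_pair (f : Fin (2 * k) → ℝ) :
    ∑ x, f x = ∑ i : Fin k, (f (lo i) + f (hi i)) := by
  rw [← Equiv.sum_comp (pairEquiv k) f, Fintype.sum_prod_type]
  refine Finset.sum_congr rfl fun i _ => ?_
  rw [Fintype.sum_bool, pairEquiv_false, pairEquiv_true]
  ring

end Aux
section Aux2
variable {k : ℕ}

lemma pm_cases (b : Bool) : pm b = 1 ∨ pm b = -1 := by cases b <;> simp [pm]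

lemma pm_mul_le_one (b b' : Bool) : pm b * pm b' ≤ 1 := by
  cases b <;> cases b' <;> simp [pm]

lemma neg_one_le_pm_mul (b b' : Bool) : -1 ≤ pm b * pm b' := by
  cases b <;> cases b' <;> simp [pm]

lemma paninski_lo (hk : 0 < k) (ε : ℝ) (z : Fin k → Bool) (i : Fin k) :
    paninski k ε z (lo i) = (1 + 2 * ε * pm (z i)) / (2 * k) := by
  have h1 : (2 * i.val) % 2 = 0 := by omega
  have h2 : ((⟨(2 * i.val) / 2, by have := i.isLt; omega⟩ : Fin k)) = i := by
    apply Fin.ext; simp; try omega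
  simp only [paninski, lo, h1, h2]
  try norm_num
  try ring_nf

lemma paninski_hi (hk : 0 < k) (ε : ℝ) (z : Fin k → Bool) (i : Fin k) :
    paninski k ε z (hi i) = (1 - 2 * ε * pm (z i)) / (2 * k) := by
  have h1 : ¬ ((2 * i.val + 1) % 2 = 0) := by omega
  have h2 : ((⟨(2 * i.val + 1) / 2, by have := i.isLt; omega⟩ : Fin k)) = i := by
    apply Fin.ext; simp; omega
  simp only [paninski, hi, h1, if_false, h2]
  try norm_num
  try ring_nf

lemma sum_paninski (hk : 0 < k) (ε : ℝ) (z : Fin k → Bool) :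
    ∑ x, paninski k ε z x = 1 := by
  have hk' : (k : ℝ) ≠ 0 := by positivity
  rw [sum_pair]
  have key : ∀ i : Fin k, paninski k ε z (lo i) + paninski k ε z (hi i) = (k : ℝ)⁻¹ := by
    intro i
    rw [paninski_lo hk, paninski_hi hk, ← add_div,
      show (1 + 2 * ε * pm (z i)) + (1 - 2 * ε * pm (z i)) = 2 by ring,
      show (2 : ℝ) * k = k * 2 by ring]
    rw [div_eq_iff (by positivity : (0:ℝ) < (k:ℝ) * 2).ne']
    field_simp
  rw [Finset.sum_congr rfl fun i _ => key i, Finset.sum_const, Finset.card_univ,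
    Fintype.card_fin, nsmul_eq_mul]
  field_simp

lemma paninski_nonneg (hk : 0 < k) {ε : ℝ} (hε : 0 ≤ ε) (hε4 : ε ≤ 1/4)
    (z : Fin k → Bool) (x : Fin (2 * k)) : 0 ≤ paninski k ε z x := by
  unfold paninski
  apply div_nonneg _ (by positivity)
  rcases pm_cases (z ⟨x.val / 2, by have := x.isLt; omega⟩) with h | h <;>
    rw [h] <;> split <;> nlinarith

lemma paninski_isDist (hk : 0 < k) {ε : ℝ} (hε : 0 ≤ ε) (hε4 : ε ≤ 1/4)
    (z : Fin k → Bool) : IsDist (paninski k ε z) :=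
  ⟨paninski_nonneg hk hε hε4 z, sum_paninski hk ε z⟩

lemma tv_paninski (hk : 0 < k) {ε : ℝ} (hε : 0 ≤ ε) (z : Fin k → Bool) :
    tvDist (paninski k ε z) (uniform2k k) = ε := by
  have hk' : (k : ℝ) ≠ 0 := by positivity
  unfold tvDist
  rw [sum_pair]
  have key : ∀ i : Fin k,
      |paninski k ε z (lo i) - uniform2k k (lo i)| +
      |paninski k ε z (hi i) - uniform2k k (hi i)| = 2 * ε / k := by
    intro i
    rw [paninski_lo hk, paninski_hi hk]
    unfold uniform2k
    have h1 : (1 + 2 * ε * pm (z i)) / (2 * k) - (2 * (k:ℝ))⁻¹ = ε * pm (z i) / k := by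
      field_simp; ring
    have h2 : (1 - 2 * ε * pm (z i)) / (2 * k) - (2 * (k:ℝ))⁻¹ = -(ε * pm (z i) / k) := by
      field_simp; ring
    rw [h1, h2, abs_neg]
    rcases pm_cases (z i) with h | h
    · rw [h, show ε * 1 / (k:ℝ) = ε / k by ring, abs_of_nonneg (by positivity)]
      ring
    · rw [h, show ε * (-1) / (k:ℝ) = -(ε / k) by ring, abs_neg,
        abs_of_nonneg (by positivity)]
      ring
  rw [Finset.sum_congr rfl fun i _ => key i, Finset.sum_const, Finset.card_univ,
    Fintype.card_fin, nsmul_eq_mul]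
  field_simp
  try ring

end Aux2
section Aux3
variable {k : ℕ}

lemma sum_uniform2k (hk : 0 < k) : ∑ x, uniform2k k x = 1 := by
  unfold uniform2k
  rw [Finset.sum_const, Finset.card_univ, Fintype.card_fin, nsmul_eq_mul]
  have : ((2 * k : ℕ) : ℝ) = 2 * (k : ℝ) := by push_cast; ring
  rw [this, mul_inv_cancel₀ (by positivity)]

lemma uniform2k_isDist (hk : 0 < k) : IsDist (uniform2k k) :=
  ⟨fun _ => by unfold uniform2k; positivity, sum_uniform2k hk⟩

lemma erase_inl (η : ℝ) (xs : Fin (2 * k)) (p : Fin (2 * k) → ℝ) (x' : Fin (2 * k)) :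
    ∑ x, p x * eraseCh k η xs x (Sum.inl x') =
      p x' * (if x' = xs then 1 else η) := by
  unfold eraseCh
  simp only [Sum.elim_inl]
  have h : ∀ x : Fin (2 * k), p x * (if x' = x then (if x = xs then 1 else η) else 0) =
      (if x' = x then p x * (if x = xs then 1 else η) else 0) := by
    intro x; split <;> simp
  rw [Finset.sum_congr rfl fun x _ => h x, Finset.sum_ite_eq]
  simp

lemma erase_inr (η : ℝ) (xs : Fin (2 * k)) (p : Fin (2 * k) → ℝ) (c : Unit) :
    ∑ x, p x * eraseCh k η xs x (Sum.inr c) =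
      (1 - η) * ((∑ x, p x) - p xs) := by
  unfold eraseCh
  simp only [Sum.elim_inr]
  have h : ∀ x : Fin (2 * k), p x * (if x = xs then 0 else 1 - η) =
      p x * (1 - η) - (if x = xs then p x * (1 - η) else 0) := by
    intro x; split <;> simp
  rw [Finset.sum_congr rfl fun x _ => h x, Finset.sum_sub_distrib, Finset.sum_ite_eq']
  simp [← Finset.sum_mul]
  ring

end Aux3
section Aux4
variable {k : ℕ}

lemma step_algebra (K η ε S Z Z' s : ℝ) (hK : 2 ≤ K) (hη : 0 < η) (hη1 : η < 1)
    (hs : s = 1 ∨ s = -1) :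
    η * (2*K * ((2*K + 8*ε^2*S)/(2*K)^2))
      + (1-η) * (2*K * (((1 + s*(2*ε)*Z)/(2*K)) * ((1 + s*(2*ε)*Z')/(2*K))))
      + ((1-η) * (1 - (1 + s*(2*ε)*Z)/(2*K))) * ((1-η) * (1 - (1 + s*(2*ε)*Z')/(2*K))) /
        ((1-η) * (1 - (2*K)⁻¹))
    = 1 + (4*η*ε^2/K) * S + (4*ε^2*(1-η)/(2*K-1)) * (Z * Z') := by
  have h1 : (2*K) ≠ 0 := by nlinarith
  have h2 : (1:ℝ) - η ≠ 0 := by nlinarith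
  have h3 : (2*K) - 1 ≠ 0 := by nlinarith
  have h4 : (1:ℝ) - (2*K)⁻¹ ≠ 0 := by
    have : (2*K)⁻¹ < 1 := by
      rw [inv_lt_one_iff₀]; right; nlinarith
    nlinarith
  have hK0 : K ≠ 0 := by nlinarith
  rcases hs with h | h <;> subst h <;> field_simp <;> ring

lemma sum_mul_ite (η : ℝ) (xs : Fin (2 * k)) (F : Fin (2 * k) → ℝ) :
    ∑ x, F x * (if x = xs then 1 else η) = η * (∑ x, F x) + (1 - η) * F xs := by
  have h : ∀ x : Fin (2 * k), F x * (if x = xs then 1 else η) =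
      F x * η + (if x = xs then F x * (1 - η) else 0) := by
    intro x; split <;> ring
  rw [Finset.sum_congr rfl fun x _ => h x, Finset.sum_add_distrib, Finset.sum_ite_eq']
  simp [← Finset.sum_mul]
  ring

lemma sum_paninski_mul (hk : 0 < k) (ε : ℝ) (z z' : Fin k → Bool) :
    ∑ x, paninski k ε z x * paninski k ε z' x =
      (2*(k:ℝ) + 8*ε^2 * (∑ i, pm (z i) * pm (z' i))) / (2*(k:ℝ))^2 := by
  rw [sum_pair]
  have key : ∀ i : Fin k,
      paninski k ε z (lo i) * paninski k ε z' (lo i) +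
      paninski k ε z (hi i) * paninski k ε z' (hi i) =
      (2 + 8*ε^2 * (pm (z i) * pm (z' i))) / (2*(k:ℝ))^2 := by
    intro i
    rw [paninski_lo hk, paninski_hi hk, paninski_lo hk, paninski_hi hk,
      div_mul_div_comm, div_mul_div_comm, ← add_div]
    rw [show (2*(k:ℝ)) * (2*(k:ℝ)) = (2*(k:ℝ))^2 by ring]
    congr 1
    ring
  rw [Finset.sum_congr rfl fun i _ => key i, ← Finset.sum_div, Finset.sum_add_distrib,
    Finset.sum_const, Finset.card_univ, Fintype.card_fin, nsmul_eq_mul, ← Finset.mul_sum]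
  push_cast
  ring_nf

/-- index of the pair containing `x` -/
def pidx (x : Fin (2 * k)) : Fin k := ⟨x.val / 2, by have := x.isLt; omega⟩

lemma step_identity (hk : 2 ≤ k) {η : ℝ} (hη : 0 < η) (hη1 : η < 1) (ε : ℝ)
    (z z' : Fin k → Bool) (xs : Fin (2 * k)) :
    ∑ c : Fin (2 * k) ⊕ Unit,
      (∑ x, paninski k ε z x * eraseCh k η xs x c) *
      (∑ x, paninski k ε z' x * eraseCh k η xs x c) /
      (∑ x, uniform2k k x * eraseCh k η xs x c)
    = 1 + (4*η*ε^2/(k:ℝ)) * (∑ i, pm (z i) * pm (z' i))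
        + (4*ε^2*(1-η)/(2*(k:ℝ)-1)) * (pm (z (pidx xs)) * pm (z' (pidx xs))) := by
  have hk0 : 0 < k := by omega
  have hkR : (2:ℝ) ≤ (k:ℝ) := by exact_mod_cast hk
  have h2k : ((2*(k:ℝ)))⁻¹ ≠ 0 := by positivity
  rw [Fintype.sum_sum_type]
  -- the ⊥ (inr) part
  have hinr : ∀ (p : Fin (2*k) → ℝ) c, (∑ x, p x * eraseCh k η xs x (Sum.inr c)) =
      (1 - η) * ((∑ x, p x) - p xs) := fun p c => erase_inr η xs p c
  -- pointwise simplification of the inl part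
  have hptw : ∀ x' : Fin (2 * k),
      (∑ x, paninski k ε z x * eraseCh k η xs x (Sum.inl x')) *
      (∑ x, paninski k ε z' x * eraseCh k η xs x (Sum.inl x')) /
      (∑ x, uniform2k k x * eraseCh k η xs x (Sum.inl x'))
      = (2*(k:ℝ)) * (paninski k ε z x' * paninski k ε z' x') * (if x' = xs then 1 else η) := by
    intro x'
    rw [erase_inl, erase_inl, erase_inl]
    unfold uniform2k
    by_cases h : x' = xs <;> simp only [h, if_true, if_false] <;>
      field_simp <;> ring
  rw [Finset.sum_congr rfl fun x' _ => hptw x']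
  rw [sum_mul_ite η xs (fun x' => (2*(k:ℝ)) * (paninski k ε z x' * paninski k ε z' x'))]
  rw [← Finset.mul_sum, sum_paninski_mul hk0]
  simp only [Fintype.sum_unique]
  rw [hinr, hinr, hinr, sum_paninski hk0, sum_paninski hk0, sum_uniform2k hk0]
  unfold uniform2k
  -- now pure algebra
  have hpz : paninski k ε z xs =
      (1 + (if xs.val % 2 = 0 then (1:ℝ) else -1)*(2*ε)*pm (z (pidx xs)))/(2*(k:ℝ)) := rfl
  have hpz' : paninski k ε z' xs =
      (1 + (if xs.val % 2 = 0 then (1:ℝ) else -1)*(2*ε)*pm (z' (pidx xs)))/(2*(k:ℝ)) := rfl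
  rw [hpz, hpz']
  set s : ℝ := (if xs.val % 2 = 0 then (1:ℝ) else -1) with hs_def
  have hs : s = 1 ∨ s = -1 := by unfold s; split <;> simp
  have := step_algebra (k:ℝ) η ε (∑ i, pm (z i) * pm (z' i))
    (pm (z (pidx xs))) (pm (z' (pidx xs))) s hkR hη hη1 hs
  linarith [this]

end Aux4
section Aux5
variable {k n : ℕ} {𝒴 : Type*} [Fintype 𝒴]

lemma prefixDist_zero (π : Protocol k n 𝒴) (p : Fin (2*k) → ℝ) (h : 0 ≤ n)
    (y : Fin 0 → 𝒴) : prefixDist π p 0 h y = 1 := by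
  simp [prefixDist]

lemma prefixDist_succ (π : Protocol k n 𝒴) (p : Fin (2*k) → ℝ) {t : ℕ}
    (ht : t + 1 ≤ n) (y : Fin (t+1) → 𝒴) :
    prefixDist π p (t+1) ht y =
      prefixDist π p t (by omega) (fun r => y r.castSucc) *
      ∑ x, p x * π ⟨t, ht⟩ (fun r => y r.castSucc) x (y (Fin.last t)) := by
  unfold prefixDist
  rw [Fin.prod_univ_castSucc]
  rfl

lemma sum_over_snoc {t : ℕ} (g : (Fin (t+1) → 𝒴) → ℝ) :
    ∑ y, g y = ∑ y' : Fin t → 𝒴, ∑ c : 𝒴, g (Fin.snoc y' c) := by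
  rw [← Equiv.sum_comp (Fin.snocEquiv (fun _ => 𝒴)) g, Fintype.sum_prod_type]
  rw [Finset.sum_comm]
  rfl

lemma sum_prefixDist (π : Protocol k n 𝒴) (p : Fin (2*k) → ℝ) (hp : IsDist p)
    (hπ : ChannelProtocol π) :
    ∀ t (ht : t ≤ n), ∑ y : Fin t → 𝒴, prefixDist π p t ht y = 1 := by
  intro t
  induction t with
  | zero => intro ht; simp [prefixDist]
  | succ t ih =>
    intro ht
    rw [sum_over_snoc]
    have step : ∀ y' : Fin t → 𝒴, ∑ c : 𝒴,
        prefixDist π p (t+1) ht (Fin.snoc y' c) =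
        prefixDist π p t (by omega) y' := by
      intro y'
      have h1 : ∀ c : 𝒴, prefixDist π p (t+1) ht (Fin.snoc y' c) =
          prefixDist π p t (by omega) y' *
          ∑ x, p x * π ⟨t, ht⟩ y' x c := by
        intro c
        rw [prefixDist_succ]
        congr 1
        · congr 1; funext r; rw [Fin.snoc_castSucc]
        · rw [show ((Fin.snoc y' c : Fin (t+1) → 𝒴) (Fin.last t)) = c from Fin.snoc_last _ _]
          congr 1
          funext x
          congr 1
          congr 1
          funext r; rw [Fin.snoc_castSucc]
      rw [Finset.sum_congr rfl fun c _ => h1 c, ← Finset.mul_sum]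
      rw [Finset.sum_comm]
      have : ∀ x, ∑ c : 𝒴, p x * π ⟨t, ht⟩ y' x c = p x := by
        intro x
        rw [← Finset.mul_sum, (hπ ⟨t, ht⟩ y' x).2, mul_one]
      rw [Finset.sum_congr rfl fun x _ => this x, hp.2, mul_one]
    rw [Finset.sum_congr rfl fun y' _ => step y', ih (by omega)]

lemma prefixDist_nonneg (π : Protocol k n 𝒴) (p : Fin (2*k) → ℝ)
    (hp : ∀ x, 0 ≤ p x) (hπ : ChannelProtocol π) (t : ℕ) (ht : t ≤ n)
    (y : Fin t → 𝒴) : 0 ≤ prefixDist π p t ht y := by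
  apply Finset.prod_nonneg
  intro s _
  apply Finset.sum_nonneg
  intro x _
  exact mul_nonneg (hp x) ((hπ _ _ _).1 _)

end Aux5
section Aux6
variable {k n : ℕ} {𝒴 : Type*} [Fintype 𝒴]

lemma prefixDist_snoc (π : Protocol k n 𝒴) (p : Fin (2*k) → ℝ) {t : ℕ}
    (ht : t + 1 ≤ n) (y' : Fin t → 𝒴) (c : 𝒴) :
    prefixDist π p (t+1) ht (Fin.snoc y' c) =
      prefixDist π p t (by omega) y' * ∑ x, p x * π ⟨t, ht⟩ y' x c := by
  rw [prefixDist_succ]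
  congr 1
  · congr 1; funext r; rw [Fin.snoc_castSucc]
  · rw [show ((Fin.snoc y' c : Fin (t+1) → 𝒴) (Fin.last t)) = c from Fin.snoc_last _ _]
    congr 1
    funext x
    congr 1
    congr 1
    funext r; rw [Fin.snoc_castSucc]

lemma unif_step_pos (hk : 2 ≤ k) {η : ℝ} (hη : 0 < η) (hη1 : η < 1)
    (xs : Fin (2*k)) (c : Fin (2*k) ⊕ Unit) :
    0 < ∑ x, uniform2k k x * eraseCh k η xs x c := by
  have hkR : (2:ℝ) ≤ (k:ℝ) := by exact_mod_cast hk
  cases c with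
  | inl x' =>
    rw [erase_inl]
    unfold uniform2k
    have : (0:ℝ) < (2 * (k:ℝ))⁻¹ := by positivity
    split <;> nlinarith
  | inr c =>
    rw [erase_inr, sum_uniform2k (by omega)]
    unfold uniform2k
    have h1 : (2 * (k:ℝ))⁻¹ < 1 := by
      rw [inv_lt_one_iff₀]; right; nlinarith
    nlinarith

lemma prefixDist_unif_pos (hk : 2 ≤ k) {η : ℝ} (hη : 0 < η) (hη1 : η < 1)
    (π : Protocol k n (Fin (2*k) ⊕ Unit))
    (hfam : UsesFamily π { W | ∃ xs : Fin (2*k), W = eraseCh k η xs })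
    (t : ℕ) (ht : t ≤ n) (y : Fin t → Fin (2*k) ⊕ Unit) :
    0 < prefixDist π (uniform2k k) t ht y := by
  apply Finset.prod_pos
  intro s _
  obtain ⟨xs, hxs⟩ := hfam ⟨s.val, lt_of_lt_of_le s.isLt ht⟩ (fun r => y ⟨r.val, lt_trans r.isLt s.isLt⟩)
  rw [hxs]
  exact unif_step_pos hk hη hη1 xs _

lemma ratio_le (hk : 2 ≤ k) {η : ℝ} (hη : 0 < η) (hη1 : η < 1)
    {ε : ℝ} (hε : 0 ≤ ε) (hε4 : ε ≤ 1/4)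
    (π : Protocol k n (Fin (2*k) ⊕ Unit))
    (hfam : UsesFamily π { W | ∃ xs : Fin (2*k), W = eraseCh k η xs })
    (hchan : ChannelProtocol π) (z z' : Fin k → Bool) :
    ∀ t (ht : t ≤ n),
      ∑ y : Fin t → Fin (2*k) ⊕ Unit,
        prefixDist π (paninski k ε z) t ht y * prefixDist π (paninski k ε z') t ht y /
          prefixDist π (uniform2k k) t ht y
      ≤ (1 + (4*η*ε^2/(k:ℝ)) * (∑ i, pm (z i) * pm (z' i)) + 4*ε^2*(1-η)/(2*(k:ℝ)-1)) ^ t := by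
  have hk0 : 0 < k := by omega
  have hkR : (2:ℝ) ≤ (k:ℝ) := by exact_mod_cast hk
  set S : ℝ := ∑ i, pm (z i) * pm (z' i) with hS_def
  set D : ℝ := 1 + (4*η*ε^2/(k:ℝ)) * S + 4*ε^2*(1-η)/(2*(k:ℝ)-1) with hD_def
  have hSk : -(k:ℝ) ≤ S := by
    rw [hS_def]
    calc -(k:ℝ) = ∑ _i : Fin k, (-1 : ℝ) := by
          rw [Finset.sum_const, Finset.card_univ, Fintype.card_fin, nsmul_eq_mul]; ring
      _ ≤ _ := Finset.sum_le_sum fun i _ => neg_one_le_pm_mul _ _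
  have hcoef : 0 ≤ 4*η*ε^2/(k:ℝ) := by positivity
  have hβ : 0 ≤ 4*ε^2*(1-η)/(2*(k:ℝ)-1) := by
    apply div_nonneg (by nlinarith) (by nlinarith)
  have hD0 : 0 ≤ D := by
    rw [hD_def]
    have h1 : (4*η*ε^2/(k:ℝ)) * (-(k:ℝ)) ≤ (4*η*ε^2/(k:ℝ)) * S :=
      mul_le_mul_of_nonneg_left hSk hcoef
    have h2 : (4*η*ε^2/(k:ℝ)) * (k:ℝ) = 4*η*ε^2 := by field_simp
    have h3 : 4*η*ε^2 ≤ 1/4 := by nlinarith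
    nlinarith
  intro t
  induction t with
  | zero =>
    intro ht
    simp [prefixDist]
  | succ t ih =>
    intro ht
    rw [sum_over_snoc]
    have step : ∀ y' : Fin t → Fin (2*k) ⊕ Unit,
        ∑ c, prefixDist π (paninski k ε z) (t+1) ht (Fin.snoc y' c) *
          prefixDist π (paninski k ε z') (t+1) ht (Fin.snoc y' c) /
          prefixDist π (uniform2k k) (t+1) ht (Fin.snoc y' c)
        ≤ (prefixDist π (paninski k ε z) t (by omega) y' *
            prefixDist π (paninski k ε z') t (by omega) y' /
            prefixDist π (uniform2k k) t (by omega) y') * D := by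
      intro y'
      have hre : ∀ c, prefixDist π (paninski k ε z) (t+1) ht (Fin.snoc y' c) *
          prefixDist π (paninski k ε z') (t+1) ht (Fin.snoc y' c) /
          prefixDist π (uniform2k k) (t+1) ht (Fin.snoc y' c)
          = (prefixDist π (paninski k ε z) t (by omega) y' *
             prefixDist π (paninski k ε z') t (by omega) y' /
             prefixDist π (uniform2k k) t (by omega) y') *
            ((∑ x, paninski k ε z x * π ⟨t, ht⟩ y' x c) *
             (∑ x, paninski k ε z' x * π ⟨t, ht⟩ y' x c) /
             (∑ x, uniform2k k x * π ⟨t, ht⟩ y' x c)) := by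
        intro c
        rw [prefixDist_snoc, prefixDist_snoc, prefixDist_snoc]
        ring
      rw [Finset.sum_congr rfl fun c _ => hre c, ← Finset.mul_sum]
      have hR0 : 0 ≤ prefixDist π (paninski k ε z) t (by omega) y' *
          prefixDist π (paninski k ε z') t (by omega) y' /
          prefixDist π (uniform2k k) t (by omega) y' := by
        apply div_nonneg
        · exact mul_nonneg
            (prefixDist_nonneg π _ (paninski_nonneg hk0 hε hε4 z) hchan _ _ _)
            (prefixDist_nonneg π _ (paninski_nonneg hk0 hε hε4 z') hchan _ _ _)
        · exact le_of_lt (prefixDist_unif_pos hk hη hη1 π hfam _ _ _)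
      apply mul_le_mul_of_nonneg_left _ hR0
      obtain ⟨xs, hxs⟩ := hfam ⟨t, ht⟩ y'
      rw [hxs, step_identity hk hη hη1 ε z z' xs]
      rw [hD_def]
      have := pm_mul_le_one (z (pidx xs)) (z' (pidx xs))
      nlinarith
    calc ∑ y' : Fin t → Fin (2*k) ⊕ Unit, ∑ c,
          prefixDist π (paninski k ε z) (t+1) ht (Fin.snoc y' c) *
          prefixDist π (paninski k ε z') (t+1) ht (Fin.snoc y' c) /
          prefixDist π (uniform2k k) (t+1) ht (Fin.snoc y' c)
        ≤ ∑ y' : Fin t → Fin (2*k) ⊕ Unit,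
            (prefixDist π (paninski k ε z) t (by omega) y' *
             prefixDist π (paninski k ε z') t (by omega) y' /
             prefixDist π (uniform2k k) t (by omega) y') * D :=
          Finset.sum_le_sum fun y' _ => step y'
      _ = (∑ y' : Fin t → Fin (2*k) ⊕ Unit,
            prefixDist π (paninski k ε z) t (by omega) y' *
            prefixDist π (paninski k ε z') t (by omega) y' /
            prefixDist π (uniform2k k) t (by omega) y') * D := by
          rw [Finset.sum_mul]
      _ ≤ D ^ t * D := by
          apply mul_le_mul_of_nonneg_right (ih (by omega)) hD0
      _ = D ^ (t+1) := by rw [pow_succ]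

end Aux6
section Aux7

lemma exp_add_exp_neg_le {l : ℝ} (hl : |l| ≤ 1) :
    Real.exp l + Real.exp (-l) ≤ 2 * (1 + l^2) := by
  have h1 := Real.exp_bound hl (n := 2) (by norm_num)
  have h2 := Real.exp_bound (x := -l) (by rwa [abs_neg]) (n := 2) (by norm_num)
  have e1 : ∑ m ∈ Finset.range 2, l ^ m / (m.factorial : ℝ) = 1 + l := by
    simp [Finset.sum_range_succ]
  have e2 : ∑ m ∈ Finset.range 2, (-l) ^ m / (m.factorial : ℝ) = 1 - l := by
    simp [Finset.sum_range_succ]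
    ring
  rw [e1] at h1
  rw [e2] at h2
  have hsq : |l| ^ 2 = l ^ 2 := sq_abs l
  have hsq' : |(-l)| ^ 2 = l ^ 2 := by rw [abs_neg, sq_abs]
  rw [hsq] at h1
  rw [hsq'] at h2
  have b1 : Real.exp l ≤ 1 + l + l^2 * (3 / (2*2)) := by
    have := abs_le.mp h1
    have hfac : ((2:ℕ).succ : ℝ) / ((2:ℕ).factorial * (2:ℕ)) = 3 / (2*2) := by
      norm_num [Nat.factorial]
    rw [hfac] at this
    linarith [this.2]
  have b2 : Real.exp (-l) ≤ 1 - l + l^2 * (3 / (2*2)) := by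
    have := abs_le.mp h2
    have hfac : ((2:ℕ).succ : ℝ) / ((2:ℕ).factorial * (2:ℕ)) = 3 / (2*2) := by
      norm_num [Nat.factorial]
    rw [hfac] at this
    linarith [this.2]
  nlinarith [sq_nonneg l]

lemma sum_exp_S_le (k : ℕ) {l : ℝ} (hl : |l| ≤ 1) :
    ∑ z : Fin k → Bool, ∑ z' : Fin k → Bool,
      Real.exp (l * ∑ i, pm (z i) * pm (z' i))
    ≤ (2:ℝ)^k * (2:ℝ)^k * Real.exp (k * l^2) := by
  have key : ∀ z : Fin k → Bool,
      ∑ z' : Fin k → Bool, Real.exp (l * ∑ i, pm (z i) * pm (z' i)) =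
      (Real.exp l + Real.exp (-l)) ^ k := by
    intro z
    have h1 : ∀ z' : Fin k → Bool, Real.exp (l * ∑ i, pm (z i) * pm (z' i)) =
        ∏ i, Real.exp (l * (pm (z i) * pm (z' i))) := by
      intro z'
      rw [Finset.mul_sum, Real.exp_sum]
    rw [Finset.sum_congr rfl fun z' _ => h1 z']
    have h2 := Finset.prod_univ_sum (fun _ : Fin k => (Finset.univ : Finset Bool))
      (fun i b => Real.exp (l * (pm (z i) * pm b)))
    rw [Fintype.piFinset_univ] at h2
    rw [← h2]
    have h3 : ∀ i : Fin k, ∑ b : Bool, Real.exp (l * (pm (z i) * pm b)) =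
        Real.exp l + Real.exp (-l) := by
      intro i
      rw [Fintype.sum_bool]
      rcases pm_cases (z i) with h | h <;> rw [h] <;> simp [pm] <;> ring_nf
    rw [Finset.prod_congr rfl fun i _ => h3 i, Finset.prod_const, Finset.card_univ,
      Fintype.card_fin]
  rw [Finset.sum_congr rfl fun z _ => key z, Finset.sum_const, Finset.card_univ]
  have hcard : Fintype.card (Fin k → Bool) = 2^k := by
    simp [Fintype.card_fun]
  rw [hcard, nsmul_eq_mul]
  push_cast
  have hbase : Real.exp l + Real.exp (-l) ≤ 2 * Real.exp (l^2) := by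
    have := exp_add_exp_neg_le hl
    have h2 : 1 + l^2 ≤ Real.exp (l^2) := by
      have := Real.add_one_le_exp (l^2); linarith
    linarith
  have hpow : (Real.exp l + Real.exp (-l)) ^ k ≤ (2 * Real.exp (l^2)) ^ k := by
    apply pow_le_pow_left₀ (by positivity) hbase
  have hexp : (2 * Real.exp (l^2)) ^ k = 2^k * Real.exp (k * l^2) := by
    rw [mul_pow, ← Real.exp_nat_mul]
  calc (2:ℝ)^k * (Real.exp l + Real.exp (-l)) ^ k
      ≤ (2:ℝ)^k * (2 * Real.exp (l^2)) ^ k := by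
        apply mul_le_mul_of_nonneg_left hpow (by positivity)
    _ = (2:ℝ)^k * ((2:ℝ)^k * Real.exp (k * l^2)) := by rw [hexp]
    _ = (2:ℝ)^k * (2:ℝ)^k * Real.exp (k * l^2) := by ring

end Aux7
section Aux8
variable {k : ℕ}

lemma D_nonneg (hk : 2 ≤ k) {η : ℝ} (hη : 0 < η) (hη1 : η < 1)
    {ε : ℝ} (hε : 0 ≤ ε) (hε4 : ε ≤ 1/4) (z z' : Fin k → Bool) :
    0 ≤ 1 + (4*η*ε^2/(k:ℝ)) * (∑ i, pm (z i) * pm (z' i)) + 4*ε^2*(1-η)/(2*(k:ℝ)-1) := by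
  have hkR : (2:ℝ) ≤ (k:ℝ) := by exact_mod_cast hk
  have hSk : -(k:ℝ) ≤ ∑ i, pm (z i) * pm (z' i) := by
    calc -(k:ℝ) = ∑ _i : Fin k, (-1 : ℝ) := by
          rw [Finset.sum_const, Finset.card_univ, Fintype.card_fin, nsmul_eq_mul]; ring
      _ ≤ _ := Finset.sum_le_sum fun i _ => neg_one_le_pm_mul _ _
  have hcoef : 0 ≤ 4*η*ε^2/(k:ℝ) := by positivity
  have hβ : 0 ≤ 4*ε^2*(1-η)/(2*(k:ℝ)-1) := by
    apply div_nonneg (by nlinarith) (by nlinarith)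
  have h1 : (4*η*ε^2/(k:ℝ)) * (-(k:ℝ)) ≤ (4*η*ε^2/(k:ℝ)) * (∑ i, pm (z i) * pm (z' i)) :=
    mul_le_mul_of_nonneg_left hSk hcoef
  have h2 : (4*η*ε^2/(k:ℝ)) * (k:ℝ) = 4*η*ε^2 := by field_simp
  have h3 : 4*η*ε^2 ≤ 1/4 := by nlinarith
  nlinarith

end Aux8
set_option maxHeartbeats 2000000 in
/-- Lower bound for interactive uniformity testing under the
partial-erasure constraints `𝒲_⊥^{1/√k}`: any `(n, ε)`-uniformity test needs
`n ≥ c · k / ε²`. -/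
theorem testing_lower_bound_partial_erasure :
    ∃ c : ℝ, 0 < c ∧
      ∀ (k : ℕ), 2 ≤ k →
      ∀ ε : ℝ, 0 < ε → ε ≤ 1 / 4 →
      ∀ (𝒰 : Type) [Fintype 𝒰],
      ∀ (n : ℕ) (μ : 𝒰 → ℝ) (π : 𝒰 → Protocol k n (Fin (2 * k) ⊕ Unit))
        (T : (Fin n → (Fin (2 * k) ⊕ Unit)) → 𝒰 → ℝ),
        IsUnifTest { W | ∃ xs : Fin (2 * k), W = eraseCh k (Real.sqrt k)⁻¹ xs }
          μ π T ε →
        c * (k : ℝ) / ε ^ 2 ≤ (n : ℝ) := by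
  refine ⟨1/100, by norm_num, ?_⟩
  intro k hk ε hε hε4 𝒰 _ n μ π T hTest
  by_contra hcon
  push_neg at hcon
  rw [show (1:ℝ)/100 * k / ε^2 = 1/100*k/ε^2 from rfl] at hcon
  obtain ⟨hμ, hfam, hchan, hT01, hcomp, hsound⟩ := hTest
  have hk0 : 0 < k := by omega
  have hkR : (2:ℝ) ≤ (k:ℝ) := by exact_mod_cast hk
  have hkpos : (0:ℝ) < (k:ℝ) := by linarith
  set η : ℝ := (Real.sqrt k)⁻¹ with hη_def
  have hsk : 1 < Real.sqrt k := by
    rw [show (1:ℝ) = Real.sqrt 1 from (Real.sqrt_one).symm]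
    exact Real.sqrt_lt_sqrt (by norm_num) (by linarith)
  have hη : 0 < η := by rw [hη_def]; positivity
  have hη1 : η < 1 := by
    rw [hη_def, inv_lt_one_iff₀]; right; exact hsk
  have hη2 : η^2 = ((k:ℝ))⁻¹ := by
    rw [hη_def, inv_pow, Real.sq_sqrt (by positivity)]
  have hε2 : (0:ℝ) < ε^2 := by positivity
  -- numeric consequence of ¬(n ≥ k/(100 ε²))
  have hnε : (n:ℝ) * ε^2 < (k:ℝ)/100 := by
    have h := mul_lt_mul_of_pos_right hcon hε2
    rw [div_mul_cancel₀ _ hε2.ne'] at h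
    linarith
  -- notation
  set M : ℝ := (2:ℝ)^k with hM_def
  have hM0 : 0 < M := by positivity
  have hcardz : (Fintype.card (Fin k → Bool) : ℝ) = M := by
    rw [hM_def]; simp [Fintype.card_fun]
  -- transcript distributions sum to one
  have hPsum : ∀ u, ∑ y : Fin n → Fin (2*k) ⊕ Unit, transDist (π u) (uniform2k k) y = 1 :=
    fun u => sum_prefixDist (π u) _ (uniform2k_isDist hk0) (hchan u) n le_rfl
  have hPzsum : ∀ (z : Fin k → Bool) u,
      ∑ y : Fin n → Fin (2*k) ⊕ Unit, transDist (π u) (paninski k ε z) y = 1 :=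
    fun z u => sum_prefixDist (π u) _ (paninski_isDist hk0 hε.le hε4 z) (hchan u) n le_rfl
  -- Step A: uniform acceptance implies small ∑ μ P T
  have hA : ∑ u, ∑ y : Fin n → Fin (2*k) ⊕ Unit,
      μ u * (transDist (π u) (uniform2k k) y * T y u) ≤ 1/100 := by
    have hsplit : ∀ u, ∑ y : Fin n → Fin (2*k) ⊕ Unit,
        μ u * (transDist (π u) (uniform2k k) y * (1 - T y u)) =
        μ u - ∑ y : Fin n → Fin (2*k) ⊕ Unit,
          μ u * (transDist (π u) (uniform2k k) y * T y u) := by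
      intro u
      have : ∀ y : Fin n → Fin (2*k) ⊕ Unit,
          μ u * (transDist (π u) (uniform2k k) y * (1 - T y u)) =
          μ u * transDist (π u) (uniform2k k) y -
          μ u * (transDist (π u) (uniform2k k) y * T y u) := by
        intro y; ring
      rw [Finset.sum_congr rfl fun y _ => this y, Finset.sum_sub_distrib,
        ← Finset.mul_sum, hPsum u, mul_one]
    rw [Finset.sum_congr rfl fun u _ => hsplit u, Finset.sum_sub_distrib, hμ.2] at hcomp
    linarith
  -- Step B: soundness on each Paninski perturbation, then sum over z
  have hB : ∀ z : Fin k → Bool, (99:ℝ)/100 ≤ ∑ u, ∑ y : Fin n → Fin (2*k) ⊕ Unit,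
      μ u * (transDist (π u) (paninski k ε z) y * T y u) := by
    intro z
    exact hsound (paninski k ε z) (paninski_isDist hk0 hε.le hε4 z)
      (le_of_eq (tv_paninski hk0 hε.le z).symm)
  -- define the mixture numerator B u y = ∑_z P_z(y)
  set B : 𝒰 → (Fin n → Fin (2*k) ⊕ Unit) → ℝ :=
    fun u y => ∑ z : Fin k → Bool, transDist (π u) (paninski k ε z) y with hB_def
  -- Step C: ∑_u μ_u ∑_y |B - M P| ≥ 0.98 M
  have hBT : M * (99/100) ≤ ∑ u, ∑ y : Fin n → Fin (2*k) ⊕ Unit,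
      μ u * (B u y * T y u) := by
    have hswap : ∑ z : Fin k → Bool, ∑ u, ∑ y : Fin n → Fin (2*k) ⊕ Unit,
        μ u * (transDist (π u) (paninski k ε z) y * T y u)
        = ∑ u, ∑ y : Fin n → Fin (2*k) ⊕ Unit, μ u * (B u y * T y u) := by
      rw [Finset.sum_comm]
      refine Finset.sum_congr rfl fun u _ => ?_
      rw [Finset.sum_comm]
      refine Finset.sum_congr rfl fun y _ => ?_
      rw [hB_def, Finset.sum_mul, Finset.mul_sum]
    rw [← hswap]
    calc M * (99/100) = ∑ _z : Fin k → Bool, (99:ℝ)/100 := by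
          rw [Finset.sum_const, Finset.card_univ, nsmul_eq_mul, hcardz]
      _ ≤ _ := Finset.sum_le_sum fun z _ => hB z
  have hgap : M * (98/100) ≤ ∑ u, ∑ y : Fin n → Fin (2*k) ⊕ Unit,
      μ u * ((B u y - M * transDist (π u) (uniform2k k) y) * T y u) := by
    have hsplit : ∀ u, ∑ y : Fin n → Fin (2*k) ⊕ Unit,
        μ u * ((B u y - M * transDist (π u) (uniform2k k) y) * T y u) =
        (∑ y : Fin n → Fin (2*k) ⊕ Unit, μ u * (B u y * T y u)) -
        M * ∑ y : Fin n → Fin (2*k) ⊕ Unit,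
          μ u * (transDist (π u) (uniform2k k) y * T y u) := by
      intro u
      rw [Finset.mul_sum, ← Finset.sum_sub_distrib]
      refine Finset.sum_congr rfl fun y _ => ?_
      ring
    rw [Finset.sum_congr rfl fun u _ => hsplit u, Finset.sum_sub_distrib, ← Finset.mul_sum]
    have h1 : M * ∑ u, ∑ y : Fin n → Fin (2*k) ⊕ Unit,
        μ u * (transDist (π u) (uniform2k k) y * T y u) ≤ M * (1/100) :=
      mul_le_mul_of_nonneg_left hA hM0.le
    linarith [hBT, h1]
  have habs : ∀ u, ∑ y : Fin n → Fin (2*k) ⊕ Unit,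
      μ u * ((B u y - M * transDist (π u) (uniform2k k) y) * T y u) ≤
      μ u * ∑ y : Fin n → Fin (2*k) ⊕ Unit,
        |B u y - M * transDist (π u) (uniform2k k) y| := by
    intro u
    rw [Finset.mul_sum]
    refine Finset.sum_le_sum fun y _ => ?_
    apply mul_le_mul_of_nonneg_left _ (hμ.1 u)
    obtain ⟨hT0, hT1⟩ := hT01 y u
    calc (B u y - M * transDist (π u) (uniform2k k) y) * T y u
        ≤ |(B u y - M * transDist (π u) (uniform2k k) y) * T y u| := le_abs_self _
      _ = |B u y - M * transDist (π u) (uniform2k k) y| * |T y u| := abs_mul _ _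
      _ ≤ |B u y - M * transDist (π u) (uniform2k k) y| * 1 := by
          apply mul_le_mul_of_nonneg_left _ (abs_nonneg _)
          rw [abs_of_nonneg hT0]; exact hT1
      _ = _ := mul_one _
  -- Step D: extract a good deterministic protocol u₀
  have hexists : ∃ u₀ : 𝒰, M * (98/100) ≤ ∑ y : Fin n → Fin (2*k) ⊕ Unit,
      |B u₀ y - M * transDist (π u₀) (uniform2k k) y| := by
    by_contra hno
    push_neg at hno
    have hposu : ∃ u, 0 < μ u := by
      by_contra hz
      push_neg at hz
      have : ∀ u, μ u = 0 := fun u => le_antisymm (hz u) (hμ.1 u)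
      have : (1:ℝ) = 0 := by
        rw [← hμ.2, Finset.sum_congr rfl fun u _ => this u, Finset.sum_const]; simp
      norm_num at this
    obtain ⟨u₁, hu₁⟩ := hposu
    have hlt : ∑ u, μ u * ∑ y : Fin n → Fin (2*k) ⊕ Unit,
        |B u y - M * transDist (π u) (uniform2k k) y| < ∑ u, μ u * (M * (98/100)) := by
      apply Finset.sum_lt_sum
      · intro u _
        exact mul_le_mul_of_nonneg_left (hno u).le (hμ.1 u)
      · exact ⟨u₁, Finset.mem_univ u₁, mul_lt_mul_of_pos_left (hno u₁) hu₁⟩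
    have heq : ∑ u, μ u * (M * (98/100)) = M * (98/100) := by
      rw [← Finset.sum_mul, hμ.2, one_mul]
    have hchain : M * (98/100) ≤ ∑ u, μ u * ∑ y : Fin n → Fin (2*k) ⊕ Unit,
        |B u y - M * transDist (π u) (uniform2k k) y| :=
      le_trans hgap (Finset.sum_le_sum fun u _ => habs u)
    linarith
  obtain ⟨u₀, hu₀⟩ := hexists
  -- abbreviations for the chosen protocol
  set A : (Fin n → Fin (2*k) ⊕ Unit) → ℝ := fun y => transDist (π u₀) (uniform2k k) y
    with hA_def
  have hApos : ∀ y, 0 < A y := fun y =>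
    prefixDist_unif_pos hk hη hη1 (π u₀) (hfam u₀) n le_rfl y
  have hAsum : ∑ y, A y = 1 := hPsum u₀
  have hBsum2 : ∑ y, B u₀ y = M := by
    rw [hB_def]
    rw [Finset.sum_comm]
    rw [Finset.sum_congr rfl fun z _ => hPzsum z u₀, Finset.sum_const, Finset.card_univ,
      nsmul_eq_mul, mul_one, hcardz]
  -- Cauchy–Schwarz
  have hCS : (∑ y, |B u₀ y - M * A y|)^2 ≤ ∑ y, (B u₀ y - M * A y)^2 / A y := by
    have h := Finset.sum_mul_sq_le_sq_mul_sq Finset.univ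
      (fun y => |B u₀ y - M * A y| / Real.sqrt (A y))
      (fun y => Real.sqrt (A y))
    have hfg : ∀ y : Fin n → Fin (2*k) ⊕ Unit,
        |B u₀ y - M * A y| / Real.sqrt (A y) * Real.sqrt (A y) = |B u₀ y - M * A y| :=
      fun y => div_mul_cancel₀ _ (Real.sqrt_pos.mpr (hApos y)).ne'
    have hf2 : ∀ y : Fin n → Fin (2*k) ⊕ Unit,
        (|B u₀ y - M * A y| / Real.sqrt (A y))^2 = (B u₀ y - M * A y)^2 / A y := by
      intro y
      rw [div_pow, sq_abs, Real.sq_sqrt (hApos y).le]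
    have hg2 : ∀ y : Fin n → Fin (2*k) ⊕ Unit, (Real.sqrt (A y))^2 = A y :=
      fun y => Real.sq_sqrt (hApos y).le
    rw [Finset.sum_congr rfl fun y _ => hfg y, Finset.sum_congr rfl fun y _ => hf2 y,
      Finset.sum_congr rfl fun y _ => hg2 y, hAsum, mul_one] at h
    exact h
  have hlow : M^2 * (9604/10000) + M^2 ≤ ∑ y, B u₀ y^2 / A y := by
    have h1 : (M * (98/100))^2 ≤ (∑ y, |B u₀ y - M * A y|)^2 := by
      apply pow_le_pow_left₀ (by positivity) hu₀
    have hexpand : ∑ y, (B u₀ y - M * A y)^2 / A y = (∑ y, B u₀ y^2 / A y) - M^2 := by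
      have hpt : ∀ y : Fin n → Fin (2*k) ⊕ Unit, (B u₀ y - M * A y)^2 / A y =
          B u₀ y^2 / A y - 2*M*B u₀ y + M^2 * A y := by
        intro y
        field_simp [(hApos y).ne']
        ring
      rw [Finset.sum_congr rfl fun y _ => hpt y]
      rw [Finset.sum_add_distrib, Finset.sum_sub_distrib, ← Finset.mul_sum, ← Finset.mul_sum,
        hBsum2, hAsum]
      ring
    have h2 : (M * (98/100))^2 = M^2 * (9604/10000) := by ring
    linarith [hCS, h1, hexpand, h2]
  -- the decoupled chi-square upper bound
  set β : ℝ := 4*ε^2*(1-η)/(2*(k:ℝ)-1) with hβ_def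
  set l : ℝ := (n:ℝ)*(4*η*ε^2/(k:ℝ)) with hl_def
  have hnn : (0:ℝ) ≤ (n:ℝ)*ε^2 := by positivity
  have hl0 : 0 ≤ l := by rw [hl_def]; positivity
  have hlk : l * (k:ℝ) = 4*η*((n:ℝ)*ε^2) := by rw [hl_def]; field_simp
  have hl25 : l ≤ 1/25 := by nlinarith [hlk, hnε, hkpos, mul_nonneg (sub_nonneg.mpr hη1.le) hnn]
  have habs_l : |l| ≤ 1 := by rw [abs_of_nonneg hl0]; linarith
  have hβ0 : 0 ≤ β := by
    rw [hβ_def]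
    apply div_nonneg (mul_nonneg (by positivity) (by linarith)) (by linarith)
  have hnβ : (n:ℝ)*β ≤ 1/25 := by
    have h2k1 : (0:ℝ) < 2*(k:ℝ)-1 := by linarith
    have heqβ : (n:ℝ)*β = 4*((n:ℝ)*ε^2)*(1-η)/(2*(k:ℝ)-1) := by
      rw [hβ_def]; ring
    have t1 : 4*((n:ℝ)*ε^2)*(1-η) ≤ 4*((n:ℝ)*ε^2) := by
      have := mul_le_mul_of_nonneg_left (show (1-η) ≤ 1 by linarith)
        (show (0:ℝ) ≤ 4*((n:ℝ)*ε^2) by positivity)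
      simpa using this
    rw [heqβ, div_le_iff₀ h2k1]
    linarith [t1, hnε, hkR]
  have hkl2 : (k:ℝ)*l^2 ≤ 1/625 := by
    have hsq : (l*(k:ℝ))^2 = 16*η^2*((n:ℝ)*ε^2)^2 := by rw [hlk]; ring
    have hη2k : η^2*(k:ℝ) = 1 := by rw [hη2]; field_simp
    have hcube : l^2*(k:ℝ)^3 = 16*((n:ℝ)*ε^2)^2 := by
      linear_combination (k:ℝ)*hsq + 16*((n:ℝ)*ε^2)^2*hη2k
    have heq : (k:ℝ)*l^2 = 16*((n:ℝ)*ε^2)^2/(k:ℝ)^2 := by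
      rw [eq_div_iff (by positivity)]
      linear_combination hcube
    have h1 : ((n:ℝ)*ε^2)^2 ≤ ((k:ℝ)/100)^2 := pow_le_pow_left₀ hnn hnε.le 2
    have h2 : ((k:ℝ)/100)^2 = (k:ℝ)^2/10000 := by ring
    rw [heq, div_le_iff₀ (by positivity)]
    linarith [h1, h2]
  have hup : ∑ y, B u₀ y^2 / A y ≤ M^2 * Real.exp ((n:ℝ)*β + (k:ℝ)*l^2) := by
    have hptB : ∀ y : Fin n → Fin (2*k) ⊕ Unit, B u₀ y^2 / A y =
        ∑ z : Fin k → Bool, ∑ z' : Fin k → Bool,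
          transDist (π u₀) (paninski k ε z) y * transDist (π u₀) (paninski k ε z') y / A y := by
      intro y
      rw [hB_def]
      rw [pow_two, Finset.sum_mul_sum, Finset.sum_div]
      exact Finset.sum_congr rfl fun z _ => by rw [Finset.sum_div]
    calc ∑ y, B u₀ y^2 / A y
        = ∑ z : Fin k → Bool, ∑ z' : Fin k → Bool, ∑ y,
            transDist (π u₀) (paninski k ε z) y * transDist (π u₀) (paninski k ε z') y / A y := by
          rw [Finset.sum_congr rfl fun y _ => hptB y, Finset.sum_comm]
          exact Finset.sum_congr rfl fun z _ => Finset.sum_comm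
      _ ≤ ∑ z : Fin k → Bool, ∑ z' : Fin k → Bool,
            Real.exp ((n:ℝ)*β) * Real.exp (l * ∑ i, pm (z i) * pm (z' i)) := by
          refine Finset.sum_le_sum fun z _ => Finset.sum_le_sum fun z' _ => ?_
          have hr := ratio_le hk hη hη1 hε.le hε4 (π u₀) (hfam u₀) (hchan u₀) z z' n le_rfl
          have hD0 := D_nonneg hk hη hη1 hε.le hε4 z z'
          have hDle : 1 + (4*η*ε^2/(k:ℝ)) * (∑ i, pm (z i) * pm (z' i)) + 4*ε^2*(1-η)/(2*(k:ℝ)-1)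
              ≤ Real.exp ((4*η*ε^2/(k:ℝ)) * (∑ i, pm (z i) * pm (z' i)) + 4*ε^2*(1-η)/(2*(k:ℝ)-1)) := by
            have := Real.add_one_le_exp ((4*η*ε^2/(k:ℝ)) * (∑ i, pm (z i) * pm (z' i)) +
              4*ε^2*(1-η)/(2*(k:ℝ)-1))
            linarith
          have hpow : (1 + (4*η*ε^2/(k:ℝ)) * (∑ i, pm (z i) * pm (z' i)) +
              4*ε^2*(1-η)/(2*(k:ℝ)-1)) ^ n ≤
              Real.exp ((n:ℝ)*((4*η*ε^2/(k:ℝ)) * (∑ i, pm (z i) * pm (z' i)) +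
                4*ε^2*(1-η)/(2*(k:ℝ)-1))) := by
            calc (1 + (4*η*ε^2/(k:ℝ)) * (∑ i, pm (z i) * pm (z' i)) +
                4*ε^2*(1-η)/(2*(k:ℝ)-1)) ^ n
                ≤ (Real.exp ((4*η*ε^2/(k:ℝ)) * (∑ i, pm (z i) * pm (z' i)) +
                    4*ε^2*(1-η)/(2*(k:ℝ)-1))) ^ n := pow_le_pow_left₀ hD0 hDle n
              _ = _ := (Real.exp_nat_mul _ n).symm
          have heqexp : (n:ℝ)*((4*η*ε^2/(k:ℝ)) * (∑ i, pm (z i) * pm (z' i)) +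
              4*ε^2*(1-η)/(2*(k:ℝ)-1)) = (n:ℝ)*β + l * ∑ i, pm (z i) * pm (z' i) := by
            rw [hβ_def, hl_def]; ring
          rw [heqexp, Real.exp_add] at hpow
          exact le_trans hr hpow
      _ = Real.exp ((n:ℝ)*β) * ∑ z : Fin k → Bool, ∑ z' : Fin k → Bool,
            Real.exp (l * ∑ i, pm (z i) * pm (z' i)) := by
          rw [Finset.mul_sum]
          exact Finset.sum_congr rfl fun z _ => by rw [Finset.mul_sum]
      _ ≤ Real.exp ((n:ℝ)*β) * ((2:ℝ)^k * (2:ℝ)^k * Real.exp ((k:ℝ) * l^2)) := by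
          apply mul_le_mul_of_nonneg_left (sum_exp_S_le k habs_l) (Real.exp_pos _).le
      _ = M^2 * Real.exp ((n:ℝ)*β + (k:ℝ)*l^2) := by
          rw [Real.exp_add, hM_def]; ring
  -- final numeric contradiction
  have hx0 : 0 ≤ (n:ℝ)*β + (k:ℝ)*l^2 := by positivity
  have hxle : (n:ℝ)*β + (k:ℝ)*l^2 ≤ 26/625 := by linarith
  have hprod : Real.exp ((n:ℝ)*β + (k:ℝ)*l^2) * (1 - ((n:ℝ)*β + (k:ℝ)*l^2)) ≤ 1 := by
    have h1x : 1 - ((n:ℝ)*β + (k:ℝ)*l^2) ≤ Real.exp (-((n:ℝ)*β + (k:ℝ)*l^2)) := by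
      have := Real.add_one_le_exp (-((n:ℝ)*β + (k:ℝ)*l^2)); linarith
    calc Real.exp ((n:ℝ)*β + (k:ℝ)*l^2) * (1 - ((n:ℝ)*β + (k:ℝ)*l^2))
        ≤ Real.exp ((n:ℝ)*β + (k:ℝ)*l^2) * Real.exp (-((n:ℝ)*β + (k:ℝ)*l^2)) :=
          mul_le_mul_of_nonneg_left h1x (Real.exp_pos _).le
      _ = 1 := by rw [← Real.exp_add, add_neg_cancel, Real.exp_zero]
  have hexpbd : Real.exp ((n:ℝ)*β + (k:ℝ)*l^2) ≤ 625/599 := by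
    have h5 : Real.exp ((n:ℝ)*β + (k:ℝ)*l^2) * (599/625) ≤
        Real.exp ((n:ℝ)*β + (k:ℝ)*l^2) * (1 - ((n:ℝ)*β + (k:ℝ)*l^2)) :=
      mul_le_mul_of_nonneg_left (by linarith) (Real.exp_pos _).le
    linarith [hprod, h5]
  have hfin : M^2 * (9604/10000) + M^2 ≤ M^2 * (625/599) := by
    calc M^2 * (9604/10000) + M^2 ≤ ∑ y, B u₀ y^2 / A y := hlow
      _ ≤ M^2 * Real.exp ((n:ℝ)*β + (k:ℝ)*l^2) := hup
      _ ≤ M^2 * (625/599) := by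
          apply mul_le_mul_of_nonneg_left hexpbd (by positivity)
  have hM2 : 0 < M^2 := by positivity
  linarith [hfin, hM2]

end Paper
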